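/- arXiv:quant-ph/0105104 — 2 statements merged into one kernel-verified Lean document; each statement's English description precedes it below -/
import Mathlib

section
/- If E satisfies (P2)–(P4), then the induced function on probability distributions satisfies the Khinchin–Faddeev recursion: E(|λ₁|²,…,|λ_{n−1}|², η|λₙ|², (1−η)|λₙ|²) = E(|λ₁|²,…,|λₙ|²) + |λₙ|² E(η, 1−η) for all distributions of amplitudes (λᵢ) and all η ∈ [0,1]. -/
open scoped BigOperators ComplexOrder
open Matrix

noncomputable section

/-- Finite-dimensional complex Hilbert space of dimension `m`. -/
abbrev H (m : ℕ) := EuclideanSpace ℂ (Fin m)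

/-- The tensor product `H m ⊗ H n`, realized as `EuclideanSpace ℂ (Fin m × Fin n)`. -/
abbrev HT (m n : ℕ) := EuclideanSpace ℂ (Fin m × Fin n)

/-- Elementary tensor `a ⊗ b`. -/
def tensorVec {m n : ℕ} (a : H m) (b : H n) : HT m n :=
  WithLp.toLp 2 (fun p : Fin m × Fin n => a p.1 * b p.2)

/-- The projection `|ψ⟩⟨ψ|` as a matrix. -/
def proj {m n : ℕ} (ψ : HT m n) : Matrix (Fin m × Fin n) (Fin m × Fin n) ℂ :=
  Matrix.of fun x y => ψ x * (starRingEnd ℂ) (ψ y)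

/-- The projection `|a⟩⟨a|` on a single factor. -/
def proj1 {m : ℕ} (a : H m) : Matrix (Fin m) (Fin m) ℂ :=
  Matrix.of fun i j => a i * (starRingEnd ℂ) (a j)

/-- Partial trace over the second factor. -/
def ptrace2 {m n : ℕ} (M : Matrix (Fin m × Fin n) (Fin m × Fin n) ℂ) :
    Matrix (Fin m) (Fin m) ℂ :=
  Matrix.of fun i j => ∑ k : Fin n, M (i, k) (j, k)

/-- Partial trace over the first factor. -/
def ptrace1 {m n : ℕ} (M : Matrix (Fin m × Fin n) (Fin m × Fin n) ℂ) :
    Matrix (Fin n) (Fin n) ℂ :=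
  Matrix.of fun i j => ∑ k : Fin m, M (k, i) (k, j)

/-- Von Neumann entropy `-Tr(ρ ln ρ)` of a Hermitian matrix, via its eigenvalues. -/
def vnEnt {k : ℕ} {M : Matrix (Fin k) (Fin k) ℂ} (h : M.IsHermitian) : ℝ :=
  ∑ i, Real.negMulLog (h.eigenvalues i)

/-- Kronecker product of square matrices. -/
def kron {m n : ℕ} (A : Matrix (Fin m) (Fin m) ℂ) (B : Matrix (Fin n) (Fin n) ℂ) :
    Matrix (Fin m × Fin n) (Fin m × Fin n) ℂ :=
  Matrix.of fun p q => A p.1 q.1 * B p.2 q.2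

/-- Action of a matrix on a vector. -/
def matVec {m n : ℕ} (M : Matrix (Fin m × Fin n) (Fin m × Fin n) ℂ) (ψ : HT m n) :
    HT m n := WithLp.toLp 2 (fun p : Fin m × Fin n => ∑ q, M p q * ψ q)

/-- The canonical pure state with Schmidt coefficients `μ`. -/
def stdVec {k : ℕ} (μ : Fin k → ℝ) : HT k k :=
  WithLp.toLp 2 (fun p : Fin k × Fin k => if p.1 = p.2 then (Real.sqrt (μ p.1) : ℂ) else 0)

/-- Strong Schmidt orthogonality: the supports of both reduced density matrices
are orthogonal. -/
def SchmidtOrthogonal {m n : ℕ} (ψ φ : HT m n) : Prop :=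
  ptrace2 (proj ψ) * ptrace2 (proj φ) = 0 ∧ ptrace1 (proj ψ) * ptrace1 (proj φ) = 0

/-- Image of `ψ` under the tensor product of two isometric embeddings. -/
def tensorMap {m n m' n' : ℕ} (f : H m →ₗᵢ[ℂ] H m') (g : H n →ₗᵢ[ℂ] H n')
    (ψ : HT m n) : HT m' n' :=
  WithLp.toLp 2 (fun p : Fin m' × Fin n' => ∑ q : Fin m × Fin n,
    ψ q * f (EuclideanSpace.single q.1 1) p.1 * g (EuclideanSpace.single q.2 1) p.2)

/-- Finite probability distribution. -/
def IsProbDist {k : ℕ} (p : Fin k → ℝ) : Prop := (∀ i, 0 ≤ p i) ∧ ∑ i, p i = 1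

/-- Multiset of nonzero Schmidt coefficients of `ψ` (eigenvalues of the reduced
density matrix). -/
def schmidtMultiset {m n : ℕ} (ψ : HT m n) (h : (ptrace2 (proj ψ)).IsHermitian) :
    Multiset ℝ :=
  (Finset.univ.val.map h.eigenvalues).filter (· ≠ 0)

/-- Trace norm of a matrix. -/
def trNorm {a b : ℕ} (A : Matrix (Fin a) (Fin b) ℂ) : ℝ :=
  ∑ i, Real.sqrt ((Matrix.posSemidef_conjTranspose_mul_self A).1.eigenvalues i)

/-- The greatest cross norm. -/
def gcn {m n : ℕ} (M : Matrix (Fin m × Fin n) (Fin m × Fin n) ℂ) : ℝ :=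
  sInf { t : ℝ | ∃ (k : ℕ) (x : Fin k → Matrix (Fin m) (Fin m) ℂ)
    (y : Fin k → Matrix (Fin n) (Fin n) ℂ),
    M = ∑ i, kron (x i) (y i) ∧ t = ∑ i, trNorm (x i) * trNorm (y i) }

/-- Density operator. -/
def IsDensity {d : Type*} [Fintype d] [DecidableEq d] (M : Matrix d d ℂ) : Prop :=
  M.PosSemidef ∧ M.trace = 1

-- AUX LEMMAS

lemma stdVec_norm_one {k : ℕ} (d : Fin k → ℝ) (hd : ∀ a, 0 ≤ d a)
    (hs : ∑ a, d a = 1) : ‖stdVec d‖ = 1 := by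
  rw [EuclideanSpace.norm_eq]
  have : ∑ p : Fin k × Fin k, ‖stdVec d p‖ ^ 2 = 1 := by
    rw [Fintype.sum_prod_type]
    calc ∑ a : Fin k, ∑ b : Fin k, ‖stdVec d (a, b)‖ ^ 2
        = ∑ a : Fin k, d a := by
          refine Finset.sum_congr rfl fun a _ => ?_
          rw [Finset.sum_eq_single a]
          · simp [stdVec, Real.sq_sqrt (hd a)]
          · intro b _ hb
            simp [stdVec, Ne.symm hb]
          · simp
      _ = 1 := hs
  rw [this, Real.sqrt_one]

lemma ptrace2_proj_stdVec {k : ℕ} (d : Fin k → ℝ) (hd : ∀ a, 0 ≤ d a) :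
    ptrace2 (proj (stdVec d)) = Matrix.diagonal (fun a => (d a : ℂ)) := by
  ext a b
  simp only [ptrace2, proj, stdVec, Matrix.of_apply]
  rcases eq_or_ne a b with rfl | hab
  · rw [Finset.sum_eq_single a]
    · rw [if_pos rfl, Matrix.diagonal_apply_eq, Complex.conj_ofReal]
      norm_cast
      exact Real.mul_self_sqrt (hd a)
    · intro c _ hc
      rw [if_neg (Ne.symm hc), zero_mul]
    · simp
  · rw [Finset.sum_eq_zero, Matrix.diagonal_apply_ne _ hab]
    intro c _
    rcases eq_or_ne a c with rfl | hac
    · rw [if_neg (Ne.symm hab), map_zero, mul_zero]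
    · rw [if_neg hac, zero_mul]

lemma ptrace1_proj_stdVec {k : ℕ} (d : Fin k → ℝ) (hd : ∀ a, 0 ≤ d a) :
    ptrace1 (proj (stdVec d)) = Matrix.diagonal (fun a => (d a : ℂ)) := by
  ext a b
  simp only [ptrace1, proj, stdVec, Matrix.of_apply]
  rcases eq_or_ne a b with rfl | hab
  · rw [Finset.sum_eq_single a]
    · rw [if_pos rfl, Matrix.diagonal_apply_eq, Complex.conj_ofReal]
      norm_cast
      exact Real.mul_self_sqrt (hd a)
    · intro c _ hc
      rw [if_neg hc, zero_mul]
    · simp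
  · rw [Finset.sum_eq_zero, Matrix.diagonal_apply_ne _ hab]
    intro c _
    rcases eq_or_ne c a with rfl | hca
    · rw [if_neg hab, map_zero, mul_zero]
    · rw [if_neg hca, zero_mul]

lemma schmidtOrth_of_stdVec {k : ℕ} (d d' : Fin k → ℝ) (hd : ∀ a, 0 ≤ d a)
    (hd' : ∀ a, 0 ≤ d' a) (h : ∀ a, d a * d' a = 0) :
    SchmidtOrthogonal (stdVec d) (stdVec d') := by
  have hz : (Matrix.diagonal (fun a => (d a : ℂ))) * (Matrix.diagonal (fun a => (d' a : ℂ))) = 0 := by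
    rw [Matrix.diagonal_mul_diagonal]
    have : (fun a => (d a : ℂ) * (d' a : ℂ)) = fun _ => (0 : ℂ) := by
      funext a
      rw [← Complex.ofReal_mul, h a, Complex.ofReal_zero]
    rw [this, Matrix.diagonal_zero]
  constructor
  · rw [ptrace2_proj_stdVec d hd, ptrace2_proj_stdVec d' hd']; exact hz
  · rw [ptrace1_proj_stdVec d hd, ptrace1_proj_stdVec d' hd']; exact hz

lemma diag_unitary {k : ℕ} (u : Fin k → ℂ) (hu : ∀ a, ‖u a‖ = 1) :
    Matrix.diagonal u ∈ Matrix.unitaryGroup (Fin k) ℂ := by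
  rw [Matrix.mem_unitaryGroup_iff]
  rw [Matrix.star_eq_conjTranspose, Matrix.diagonal_conjTranspose, Matrix.diagonal_mul_diagonal]
  have huv : (fun i => u i * star u i) = fun _ => (1 : ℂ) := by
    funext a
    rw [Pi.star_apply, Complex.star_def, Complex.mul_conj', hu a]
    norm_num
  rw [huv, Matrix.diagonal_one]

/-- embedding H 1 into H m at coordinate c -/
def embed1 {m : ℕ} (c : Fin m) : H 1 →ₗᵢ[ℂ] H m where
  toLinearMap :=
    { toFun := fun x => x 0 • EuclideanSpace.single c 1
      map_add' := by intro x y; simp [add_smul]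
      map_smul' := by intro a x; simp [smul_smul] }
  norm_map' := by
    intro x
    simp only [LinearMap.coe_mk, AddHom.coe_mk]
    show ‖x 0 • EuclideanSpace.single c (1:ℂ)‖ = ‖x‖
    rw [norm_smul, EuclideanSpace.norm_single]
    rw [EuclideanSpace.norm_eq]
    simp [Fin.sum_univ_one, Real.sqrt_sq_eq_abs]

/-- embedding H 2 into H m at coordinates c ≠ c' -/
def embed2 {m : ℕ} (c c' : Fin m) (hcc' : c ≠ c') : H 2 →ₗᵢ[ℂ] H m where
  toLinearMap :=
    { toFun := fun x => x 0 • EuclideanSpace.single c (1:ℂ) + x 1 • EuclideanSpace.single c' (1:ℂ)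
      map_add' := by intro x y; simp [add_smul]; module
      map_smul' := by intro a x; simp [smul_smul] }
  norm_map' := by
    intro x
    simp only [LinearMap.coe_mk, AddHom.coe_mk]
    show ‖(x 0 • EuclideanSpace.single c (1:ℂ) + x 1 • EuclideanSpace.single c' (1:ℂ) : H m)‖ = ‖x‖
    rw [EuclideanSpace.norm_eq, EuclideanSpace.norm_eq]
    congr 1
    have hterm : ∀ a : Fin m,
        ‖((x 0 • EuclideanSpace.single c (1:ℂ) + x 1 • EuclideanSpace.single c' (1:ℂ) : H m)) a‖ ^ 2
          = (if a = c then ‖x 0‖ ^ 2 else 0) + (if a = c' then ‖x 1‖ ^ 2 else 0) := by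
      intro a
      have hv : ((x 0 • EuclideanSpace.single c (1:ℂ) + x 1 • EuclideanSpace.single c' (1:ℂ) : H m)) a
          = x 0 * (if a = c then 1 else 0) + x 1 * (if a = c' then 1 else 0) := by
        simp [EuclideanSpace.single_apply, smul_eq_mul]
      rw [hv]
      rcases eq_or_ne a c with rfl | hac
      · rcases eq_or_ne a c' with rfl | hac'
        · exact absurd rfl hcc'
        · simp [hac']
      · rcases eq_or_ne a c' with rfl | hac'
        · simp [hac]
        · simp [hac, hac']
    rw [Finset.sum_congr rfl fun a _ => hterm a, Finset.sum_add_distrib]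
    simp [Fin.sum_univ_two]

/-- Under (P2)-(P4), the function induced by `E` on probability distributions
(its common value on pure states with given Schmidt coefficients) satisfies the
Khinchin–Faddeev recursion. -/
theorem induced_function_satisfies_recursion
    (E : ∀ m n : ℕ, HT m n → ℝ)
    (hP2 : ∀ (m n : ℕ) (U : Matrix (Fin m) (Fin m) ℂ) (V : Matrix (Fin n) (Fin n) ℂ),
      U ∈ Matrix.unitaryGroup (Fin m) ℂ → V ∈ Matrix.unitaryGroup (Fin n) ℂ →
      ∀ ψ : HT m n, E m n (matVec (kron U V) ψ) = E m n ψ)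
    (hP3 : ∀ (m n m' n' : ℕ) (f : H m →ₗᵢ[ℂ] H m') (g : H n →ₗᵢ[ℂ] H n')
      (ψ : HT m n), E m' n' (tensorMap f g ψ) = E m n ψ)
    (hP4 : ∀ (m n k : ℕ) (ψ : Fin k → HT m n), (∀ i, ‖ψ i‖ = 1) →
      (∀ i j, i ≠ j → SchmidtOrthogonal (ψ i) (ψ j)) →
      ∀ lam : Fin k → ℂ, (∑ i, ‖lam i‖ ^ 2) = 1 →
      E m n (∑ i, lam i • ψ i)
        = E k k (stdVec fun i => ‖lam i‖ ^ 2) + ∑ i, ‖lam i‖ ^ 2 * E m n (ψ i)) :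
    ∀ (N : ℕ) (lam : Fin (N + 1) → ℂ), (∑ i, ‖lam i‖ ^ 2) = 1 →
      ∀ η : ℝ, 0 ≤ η → η ≤ 1 →
      E (N + 2) (N + 2) (stdVec (Fin.snoc
          (Function.update (fun i => ‖lam i‖ ^ 2) (Fin.last N)
            (η * ‖lam (Fin.last N)‖ ^ 2))
          ((1 - η) * ‖lam (Fin.last N)‖ ^ 2)))
        = E (N + 1) (N + 1) (stdVec fun i => ‖lam i‖ ^ 2)
          + ‖lam (Fin.last N)‖ ^ 2 * E 2 2 (stdVec ![η, 1 - η]) := by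
  intro N lam hsum η hη0 hη1
  set L : Fin (N + 1) := Fin.last N with hL
  set c1 : Fin (N + 1) → ℝ := fun i => if i = L then η else 1 with hc1
  set c2 : Fin (N + 1) → ℝ := fun i => if i = L then 1 - η else 0 with hc2
  set d : Fin (N + 1) → Fin (N + 2) → ℝ := fun i a =>
    (if a = i.castSucc then c1 i else 0)
      + (if a = Fin.last (N + 1) then c2 i else 0) with hd
  set μ : Fin (N + 2) → ℝ := Fin.snoc
      (Function.update (fun i => ‖lam i‖ ^ 2) L (η * ‖lam L‖ ^ 2))
      ((1 - η) * ‖lam L‖ ^ 2) with hμdef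
  set ψ : Fin (N + 1) → HT (N + 2) (N + 2) := fun i => stdVec (d i) with hψ
  have hcsl : ∀ i : Fin (N + 1), i.castSucc ≠ Fin.last (N + 1) :=
    fun i => (Fin.castSucc_lt_last i).ne
  have hc1_nonneg : ∀ i, 0 ≤ c1 i := by
    intro i; simp only [hc1]; split <;> linarith
  have hc2_nonneg : ∀ i, 0 ≤ c2 i := by
    intro i; simp only [hc2]; split <;> linarith
  have hd_nonneg : ∀ i a, 0 ≤ d i a := by
    intro i a; simp only [hd]
    have h1 := hc1_nonneg i; have h2 := hc2_nonneg i
    split <;> split <;> linarith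
  have hdsum : ∀ i, ∑ a, d i a = 1 := by
    intro i
    simp only [hd]
    rw [Finset.sum_add_distrib,
      Finset.sum_ite_eq' Finset.univ i.castSucc (fun _ => c1 i),
      Finset.sum_ite_eq' Finset.univ (Fin.last (N + 1)) (fun _ => c2 i)]
    simp only [Finset.mem_univ, if_true]
    simp only [hc1, hc2]
    split <;> ring
  have hψnorm : ∀ i, ‖ψ i‖ = 1 := by
    intro i
    rw [hψ]
    exact stdVec_norm_one (d i) (hd_nonneg i) (hdsum i)
  have hdprod : ∀ i j, i ≠ j → ∀ a, d i a * d j a = 0 := by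
    intro i j hij a
    simp only [hd]
    rcases eq_or_ne a (Fin.last (N + 1)) with rfl | ha
    · rw [if_neg (Ne.symm (hcsl i)), if_neg (Ne.symm (hcsl j)), if_pos rfl, if_pos rfl,
        zero_add, zero_add]
      simp only [hc2]
      rcases eq_or_ne i L with rfl | hiL
      · rw [if_neg (fun h : j = L => hij h.symm), mul_zero]
      · rw [if_neg hiL, zero_mul]
    · rw [if_neg ha, if_neg ha, add_zero, add_zero]
      rcases eq_or_ne a i.castSucc with rfl | hai
      · rw [if_neg (fun h : i.castSucc = j.castSucc => hij (Fin.castSucc_inj.mp h)), mul_zero]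
      · rw [if_neg hai, zero_mul]
  have horth : ∀ i j, i ≠ j → SchmidtOrthogonal (ψ i) (ψ j) := by
    intro i j hij
    rw [hψ]
    exact schmidtOrth_of_stdVec (d i) (d j) (hd_nonneg i) (hd_nonneg j) (hdprod i j hij)
  set s : Fin (N + 2) → ℂ := fun a => ∑ i, lam i * (Real.sqrt (d i a) : ℂ) with hs
  have hmu_cast : ∀ b : Fin (N + 1),
      μ b.castSucc = if b = L then η * ‖lam L‖ ^ 2 else ‖lam b‖ ^ 2 := by
    intro b
    rw [hμdef, Fin.snoc_castSucc, Function.update_apply]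
  have hmu_last : μ (Fin.last (N + 1)) = (1 - η) * ‖lam L‖ ^ 2 := by
    simp only [hμdef]
    rw [Fin.snoc_last]
  have hs_cast : ∀ b : Fin (N + 1), s b.castSucc = lam b * (Real.sqrt (c1 b) : ℂ) := by
    intro b
    simp only [hs]
    rw [show ∑ i, lam i * (Real.sqrt (d i b.castSucc) : ℂ)
        = ∑ i, (if i = b then lam b * (Real.sqrt (c1 b) : ℂ) else 0) from
      Finset.sum_congr rfl fun i _ => by
        rcases eq_or_ne i b with rfl | hib
        · rw [if_pos rfl]; simp only [hd, if_true]
          rw [if_neg (hcsl i), add_zero]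
        · rw [if_neg hib]; simp only [hd]
          rw [if_neg (fun h : b.castSucc = i.castSucc => hib (Fin.castSucc_inj.mp h).symm),
            if_neg (hcsl b), add_zero, Real.sqrt_zero, Complex.ofReal_zero, mul_zero]]
    rw [Finset.sum_ite_eq' Finset.univ b (fun _ => lam b * (Real.sqrt (c1 b) : ℂ))]
    simp
  have hs_last : s (Fin.last (N + 1)) = lam L * (Real.sqrt (1 - η) : ℂ) := by
    simp only [hs]
    rw [show ∑ i, lam i * (Real.sqrt (d i (Fin.last (N + 1))) : ℂ)
        = ∑ i, (if i = L then lam L * (Real.sqrt (1 - η) : ℂ) else 0) from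
      Finset.sum_congr rfl fun i _ => by
        simp only [hd, if_true]
        rw [if_neg (Ne.symm (hcsl i)), zero_add]
        simp only [hc2]
        rcases eq_or_ne i L with rfl | hiL
        · rw [if_pos rfl, if_pos rfl]
        · rw [if_neg hiL, if_neg hiL, Real.sqrt_zero, Complex.ofReal_zero, mul_zero]]
    rw [Finset.sum_ite_eq' Finset.univ L (fun _ => lam L * (Real.sqrt (1 - η) : ℂ))]
    simp
  have hsnorm : ∀ a, ‖s a‖ ^ 2 = μ a := by
    intro a
    refine Fin.lastCases ?_ ?_ a
    · rw [hs_last, hmu_last, norm_mul, mul_pow, Complex.norm_real, Real.norm_eq_abs,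
        abs_of_nonneg (Real.sqrt_nonneg _), Real.sq_sqrt (by linarith)]
      ring
    · intro b
      rw [hs_cast, hmu_cast, norm_mul, mul_pow, Complex.norm_real, Real.norm_eq_abs,
        abs_of_nonneg (Real.sqrt_nonneg _), Real.sq_sqrt (hc1_nonneg b)]
      simp only [hc1]
      rcases eq_or_ne b L with rfl | hbL
      · rw [if_pos rfl, if_pos rfl]; ring
      · rw [if_neg hbL, if_neg hbL]; ring
  have hmu_nonneg : ∀ a, 0 ≤ μ a := by
    intro a; rw [← hsnorm a]; positivity
  set u : Fin (N + 2) → ℂ := fun a =>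
    if μ a = 0 then 1 else s a / (Real.sqrt (μ a) : ℂ) with hu
  have hnorm_s : ∀ a, ‖s a‖ = Real.sqrt (μ a) := by
    intro a; rw [← hsnorm a, Real.sqrt_sq (norm_nonneg _)]
  have hu1 : ∀ a, ‖u a‖ = 1 := by
    intro a; simp only [hu]
    rcases eq_or_ne (μ a) 0 with h | h
    · rw [if_pos h]; simp
    · rw [if_neg h, norm_div, hnorm_s a, Complex.norm_real, Real.norm_eq_abs,
        abs_of_nonneg (Real.sqrt_nonneg _), div_self]
      exact Real.sqrt_ne_zero'.mpr (lt_of_le_of_ne (hmu_nonneg a) (Ne.symm h))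
  have hus : ∀ a, u a * (Real.sqrt (μ a) : ℂ) = s a := by
    intro a; simp only [hu]
    rcases eq_or_ne (μ a) 0 with h | h
    · rw [if_pos h]
      have hz : ‖s a‖ = 0 := by rw [hnorm_s a, h, Real.sqrt_zero]
      rw [norm_eq_zero] at hz
      rw [h, Real.sqrt_zero, Complex.ofReal_zero, mul_zero, hz]
    · rw [if_neg h, div_mul_cancel₀]
      exact Complex.ofReal_ne_zero.mpr
        (Real.sqrt_ne_zero'.mpr (lt_of_le_of_ne (hmu_nonneg a) (Ne.symm h)))
  have hU : Matrix.diagonal u ∈ Matrix.unitaryGroup (Fin (N + 2)) ℂ := diag_unitary u hu1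
  have hmat : matVec (kron (Matrix.diagonal u) 1) (stdVec μ) = ∑ i, lam i • ψ i := by
    ext p
    have hRHS : (∑ i, lam i • ψ i) p = if p.1 = p.2 then s p.1 else 0 := by
      rw [WithLp.ofLp_sum, Finset.sum_apply p Finset.univ (fun i => (lam i • ψ i).ofLp)]
      have hterm : ∀ i, (lam i • ψ i) p
          = if p.1 = p.2 then lam i * (Real.sqrt (d i p.1) : ℂ) else 0 := by
        intro i
        have h0 : (lam i • ψ i) p = lam i * ψ i p := rfl
        have h1 : ψ i p = if p.1 = p.2 then ((Real.sqrt (d i p.1) : ℝ) : ℂ) else 0 := rfl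
        rw [h0, h1, mul_ite, mul_zero]
      rw [Finset.sum_congr rfl fun i _ => hterm i]
      split
      · rw [hs]
      · exact Finset.sum_const_zero
    have hLHS : matVec (kron (Matrix.diagonal u) 1) (stdVec μ) p
        = if p.1 = p.2 then s p.1 else 0 := by
      show (∑ q : Fin (N + 2) × Fin (N + 2),
        kron (Matrix.diagonal u) 1 p q * stdVec μ q) = _
      rw [Finset.sum_eq_single p]
      · have hk : kron (Matrix.diagonal u) 1 p p = u p.1 := by
          show (Matrix.diagonal u) p.1 p.1 * (1 : Matrix (Fin (N+2)) (Fin (N+2)) ℂ) p.2 p.2 = u p.1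
          rw [Matrix.diagonal_apply_eq, Matrix.one_apply_eq, mul_one]
        rw [hk]
        have hstd : stdVec μ p = if p.1 = p.2 then ((Real.sqrt (μ p.1) : ℝ) : ℂ) else 0 := rfl
        rw [hstd]
        split
        · exact hus p.1
        · exact mul_zero _
      · intro q _ hq
        rcases eq_or_ne p.1 q.1 with h1 | h1
        · have h2 : p.2 ≠ q.2 := by
            intro h2; exact hq (Prod.ext h1.symm h2.symm)
          have hk : kron (Matrix.diagonal u) 1 p q = 0 := by
            show (Matrix.diagonal u) p.1 q.1 * (1 : Matrix (Fin (N+2)) (Fin (N+2)) ℂ) p.2 q.2 = 0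
            rw [Matrix.one_apply_ne h2, mul_zero]
          rw [hk, zero_mul]
        · have hk : kron (Matrix.diagonal u) 1 p q = 0 := by
            show (Matrix.diagonal u) p.1 q.1 * (1 : Matrix (Fin (N+2)) (Fin (N+2)) ℂ) p.2 q.2 = 0
            rw [Matrix.diagonal_apply_ne _ h1, zero_mul]
          rw [hk, zero_mul]
      · intro hp; exact absurd (Finset.mem_univ p) hp
    rw [hLHS, hRHS]
  have hE2 := hP2 (N + 2) (N + 2) (Matrix.diagonal u) 1 hU (one_mem _) (stdVec μ)
  have hE4 := hP4 (N + 2) (N + 2) (N + 1) ψ hψnorm horth lam hsum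
  set ψ0 : HT 1 1 := stdVec (fun _ => (1 : ℝ)) with hψ0
  have hψ0norm : ‖ψ0‖ = 1 := by
    rw [hψ0]
    exact stdVec_norm_one _ (fun _ => zero_le_one) (by simp)
  have hE11 : E 1 1 ψ0 = 0 := by
    have h := hP4 1 1 1 (fun _ => ψ0) (fun _ => hψ0norm)
      (fun i j hij => absurd (Subsingleton.elim i j) hij) (fun _ => 1) (by simp)
    rw [Fin.sum_univ_one, one_smul, Fin.sum_univ_one] at h
    have harg : (stdVec fun _ : Fin 1 => ‖(1 : ℂ)‖ ^ 2) = ψ0 := by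
      rw [hψ0]; congr 1; funext i; simp
    rw [harg] at h
    simp only [norm_one, one_pow, one_mul] at h
    linarith
  have hEsep : ∀ i : Fin (N + 1), i ≠ L → E (N + 2) (N + 2) (ψ i) = 0 := by
    intro i hiL
    have hembed : ((embed1 i.castSucc) (EuclideanSpace.single (0 : Fin 1) 1) : H (N + 2))
        = EuclideanSpace.single i.castSucc (1 : ℂ) := by
      show ((EuclideanSpace.single (0 : Fin 1) (1:ℂ)) 0) • EuclideanSpace.single i.castSucc (1:ℂ)
        = EuclideanSpace.single i.castSucc (1 : ℂ)
      rw [EuclideanSpace.single_apply, if_pos rfl, one_smul]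
    have hmap : tensorMap (embed1 i.castSucc) (embed1 i.castSucc) ψ0 = ψ i := by
      ext p
      show (∑ q : Fin 1 × Fin 1, ψ0 q
          * (embed1 i.castSucc) (EuclideanSpace.single q.1 1) p.1
          * (embed1 i.castSucc) (EuclideanSpace.single q.2 1) p.2) = ψ i p
      rw [Fintype.sum_prod_type, Fin.sum_univ_one, Fin.sum_univ_one, hembed]
      have hψ0v : ψ0 ((0 : Fin 1), (0 : Fin 1)) = 1 := by
        show (if ((0:Fin 1),(0:Fin 1)).1 = ((0:Fin 1),(0:Fin 1)).2
          then ((Real.sqrt (1:ℝ) : ℝ) : ℂ) else 0) = 1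
        simp
      rw [hψ0v, one_mul]
      have hψip : ψ i p = if p.1 = p.2 then ((Real.sqrt (d i p.1) : ℝ) : ℂ) else 0 := rfl
      rw [hψip, EuclideanSpace.single_apply, EuclideanSpace.single_apply]
      have hdi : d i p.1 = if p.1 = i.castSucc then 1 else 0 := by
        simp only [hd, hc1, hc2]
        rw [if_neg hiL, if_neg hiL]
        simp
      rw [hdi]
      by_cases h1p : p.1 = i.castSucc
      · by_cases h2p : p.2 = i.castSucc
        · rw [if_pos h1p, if_pos h2p, if_pos (h1p.trans h2p.symm), if_pos h1p]
          simp
        · rw [if_pos h1p, if_neg h2p, if_neg (fun h : p.1 = p.2 => h2p (h ▸ h1p))]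
          ring
      · rw [if_neg h1p, if_neg h1p, zero_mul]
        split <;> simp
    rw [← hmap, hP3 1 1 (N + 2) (N + 2) (embed1 i.castSucc) (embed1 i.castSucc) ψ0, hE11]
  have hElast : E (N + 2) (N + 2) (ψ L) = E 2 2 (stdVec ![η, 1 - η]) := by
    set f : H 2 →ₗᵢ[ℂ] H (N + 2) := embed2 L.castSucc (Fin.last (N + 1)) (hcsl L) with hf
    have hf0 : (f (EuclideanSpace.single (0 : Fin 2) 1) : H (N + 2))
        = EuclideanSpace.single L.castSucc (1 : ℂ) := by
      show ((EuclideanSpace.single (0 : Fin 2) (1:ℂ)) 0) • EuclideanSpace.single L.castSucc (1:ℂ)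
          + ((EuclideanSpace.single (0 : Fin 2) (1:ℂ)) 1) • EuclideanSpace.single (Fin.last (N+1)) (1:ℂ)
        = EuclideanSpace.single L.castSucc (1 : ℂ)
      rw [EuclideanSpace.single_apply, EuclideanSpace.single_apply]
      norm_num
    have hf1 : (f (EuclideanSpace.single (1 : Fin 2) 1) : H (N + 2))
        = EuclideanSpace.single (Fin.last (N + 1)) (1 : ℂ) := by
      show ((EuclideanSpace.single (1 : Fin 2) (1:ℂ)) 0) • EuclideanSpace.single L.castSucc (1:ℂ)
          + ((EuclideanSpace.single (1 : Fin 2) (1:ℂ)) 1) • EuclideanSpace.single (Fin.last (N+1)) (1:ℂ)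
        = EuclideanSpace.single (Fin.last (N + 1)) (1 : ℂ)
      rw [EuclideanSpace.single_apply, EuclideanSpace.single_apply]
      norm_num
    have hmap : tensorMap f f (stdVec ![η, 1 - η]) = ψ L := by
      ext p
      show (∑ q : Fin 2 × Fin 2, stdVec ![η, 1 - η] q
          * f (EuclideanSpace.single q.1 1) p.1
          * f (EuclideanSpace.single q.2 1) p.2) = ψ L p
      rw [Fintype.sum_prod_type, Fin.sum_univ_two, Fin.sum_univ_two, Fin.sum_univ_two]
      have hv00 : stdVec ![η, 1 - η] ((0 : Fin 2), (0 : Fin 2)) = ((Real.sqrt η : ℝ) : ℂ) := by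
        show (if (0 : Fin 2) = (0 : Fin 2) then ((Real.sqrt (![η, 1 - η] 0) : ℝ) : ℂ) else 0) = _
        simp
      have hv11 : stdVec ![η, 1 - η] ((1 : Fin 2), (1 : Fin 2)) = ((Real.sqrt (1 - η) : ℝ) : ℂ) := by
        show (if (1 : Fin 2) = (1 : Fin 2) then ((Real.sqrt (![η, 1 - η] 1) : ℝ) : ℂ) else 0) = _
        simp
      have hv01 : stdVec ![η, 1 - η] ((0 : Fin 2), (1 : Fin 2)) = 0 := by
        show (if (0 : Fin 2) = (1 : Fin 2) then ((Real.sqrt (![η, 1 - η] 0) : ℝ) : ℂ) else 0) = 0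
        simp
      have hv10 : stdVec ![η, 1 - η] ((1 : Fin 2), (0 : Fin 2)) = 0 := by
        show (if (1 : Fin 2) = (0 : Fin 2) then ((Real.sqrt (![η, 1 - η] 1) : ℝ) : ℂ) else 0) = 0
        simp
      rw [hv00, hv11, hv01, hv10, hf0, hf1, zero_mul, zero_mul, zero_mul, zero_mul,
        add_zero, zero_add]
      have hψLp : ψ L p = if p.1 = p.2 then ((Real.sqrt (d L p.1) : ℝ) : ℂ) else 0 := rfl
      rw [hψLp, EuclideanSpace.single_apply, EuclideanSpace.single_apply,
        EuclideanSpace.single_apply, EuclideanSpace.single_apply]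
      have hdL : d L p.1 = (if p.1 = L.castSucc then η else 0)
          + (if p.1 = Fin.last (N + 1) then 1 - η else 0) := by
        simp only [hd, hc1, hc2, if_true]
      rw [hdL]
      by_cases h1 : p.1 = L.castSucc
      · have h1' : p.1 ≠ Fin.last (N + 1) := by rw [h1]; exact hcsl L
        by_cases h2 : p.2 = L.castSucc
        · rw [if_pos h1, if_pos h2, if_pos (h1.trans h2.symm), if_pos h1,
            if_neg h1', if_neg h1']
          have h2' : p.2 ≠ Fin.last (N + 1) := by rw [h2]; exact hcsl L
          rw [if_neg h2']
          simp
        · rw [if_pos h1, if_neg h2, if_neg h1',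
            if_neg (fun h : p.1 = p.2 => h2 (h ▸ h1))]
          by_cases h2' : p.2 = Fin.last (N + 1)
          · rw [if_pos h2']; ring
          · rw [if_neg h2']; ring
      · by_cases h1' : p.1 = Fin.last (N + 1)
        · by_cases h2' : p.2 = Fin.last (N + 1)
          · have h2 : p.2 ≠ L.castSucc := by rw [h2']; exact Ne.symm (hcsl L)
            rw [if_neg h1, if_pos h1', if_pos h2', if_pos (h1'.trans h2'.symm),
              if_neg h1, if_pos h1', if_neg h2]
            simp
          · rw [if_neg h1, if_pos h1', if_neg h2',
              if_neg (fun h : p.1 = p.2 => h2' (h ▸ h1'))]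
            by_cases h2 : p.2 = L.castSucc
            · rw [if_pos h2]; ring
            · rw [if_neg h2]; ring
        · rw [if_neg h1, if_neg h1', if_neg h1, if_neg h1']
          split <;> simp
    rw [← hmap, hP3 2 2 (N + 2) (N + 2) f f (stdVec ![η, 1 - η])]
  calc E (N + 2) (N + 2) (stdVec μ)
      = E (N + 2) (N + 2) (matVec (kron (Matrix.diagonal u) 1) (stdVec μ)) := hE2.symm
    _ = E (N + 2) (N + 2) (∑ i, lam i • ψ i) := by rw [hmat]
    _ = E (N + 1) (N + 1) (stdVec fun i => ‖lam i‖ ^ 2)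
          + ∑ i, ‖lam i‖ ^ 2 * E (N + 2) (N + 2) (ψ i) := hE4
    _ = E (N + 1) (N + 1) (stdVec fun i => ‖lam i‖ ^ 2)
          + ‖lam L‖ ^ 2 * E 2 2 (stdVec ![η, 1 - η]) := by
        congr 1
        rw [Finset.sum_eq_single L]
        · rw [hElast]
        · intro i _ hiL; rw [hEsep i hiL, mul_zero]
        · intro hL'; exact absurd (Finset.mem_univ L) hL'

end
end

section
/- The functional E(σ) := ‖σ‖_γ ln ‖σ‖_γ does not satisfy the superposition axiom (P4): there exist Schmidt orthogonal pure states ψ₁, ψ₂ and amplitudes λ₁, λ₂ with |λ₁|² + |λ₂|² = 1 such that E(P_{λ₁ψ₁+λ₂ψ₂}) ≠ E(|λ₁|², |λ₂|²) + |λ₁|² E(P_{ψ₁}) + |λ₂|² E(P_{ψ₂}). -/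
open scoped BigOperators ComplexOrder
open Matrix

noncomputable section

namespace GcnAux

lemma sum_eig_eq_trace {N : ℕ} {M : Matrix (Fin N) (Fin N) ℂ} (hM : M.IsHermitian) :
    (∑ i, (hM.eigenvalues i : ℂ)) = M.trace := by
  conv_rhs => rw [hM.spectral_theorem]
  rw [Unitary.conjStarAlgAut_apply]
  rw [Matrix.trace_mul_cycle]
  rw [show (star (hM.eigenvectorUnitary : Matrix (Fin N) (Fin N) ℂ)) *
      (hM.eigenvectorUnitary : Matrix (Fin N) (Fin N) ℂ) = 1 from
    Matrix.mem_unitaryGroup_iff'.mp hM.eigenvectorUnitary.2, one_mul]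
  simp [Matrix.trace_diagonal]

lemma eig_zero_or {N : ℕ} {M : Matrix (Fin N) (Fin N) ℂ} (hM : M.IsHermitian)
    (c : ℝ) (h : M * M = (c : ℂ) • M) (i : Fin N) :
    hM.eigenvalues i = 0 ∨ hM.eigenvalues i = c := by
  have hv := hM.mulVec_eigenvectorBasis i
  set v : Fin N → ℂ := ⇑(hM.eigenvectorBasis i) with hvdef
  have hne : v ≠ 0 := by
    have h0 := hM.eigenvectorBasis.orthonormal.ne_zero i
    intro hzero
    apply h0
    ext j
    exact congrFun hzero j
  obtain ⟨j, hj⟩ : ∃ j, v j ≠ 0 := by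
    by_contra hcon
    push_neg at hcon
    exact hne (funext hcon)
  set l := hM.eigenvalues i with hl
  have hvj : (M *ᵥ v) j = (l : ℂ) * v j := by
    rw [hv]; simp [Complex.real_smul]
  have h1 : ((M * M) *ᵥ v) j = (l : ℂ) * ((l : ℂ) * v j) := by
    rw [← Matrix.mulVec_mulVec, hv, Matrix.mulVec_smul]
    simp only [Pi.smul_apply, Complex.real_smul]
    rw [hvj]
  have h2 : ((M * M) *ᵥ v) j = (c : ℂ) * ((l : ℂ) * v j) := by
    rw [h, Matrix.smul_mulVec]
    simp only [Pi.smul_apply, smul_eq_mul]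
    rw [hvj]
  have heq := h1.symm.trans h2
  have h3 : ((l : ℂ) * l) * v j = ((c : ℂ) * l) * v j := by linear_combination heq
  have h4 : (l : ℂ) * l = (c : ℂ) * l := mul_right_cancel₀ hj h3
  have h7 : l * l = c * l := by exact_mod_cast h4
  rcases mul_eq_zero.mp (by ring_nf; linarith : l * (l - c) = 0) with h8 | h8
  · left; exact h8
  · right; linarith [sub_eq_zero.mp h8]

lemma trNorm_nonneg {a b : ℕ} (A : Matrix (Fin a) (Fin b) ℂ) : 0 ≤ trNorm A :=
  Finset.sum_nonneg fun _ _ => Real.sqrt_nonneg _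

lemma conjT_mul_std {a b : ℕ} (j : Fin a) (k : Fin b) (z : ℂ) :
    (Matrix.single j k z)ᴴ * (Matrix.single j k z)
      = Matrix.single k k ((‖z‖ ^ 2 : ℝ) : ℂ) := by
  ext p q
  simp only [Matrix.mul_apply, Matrix.conjTranspose_apply, Matrix.single, Matrix.of_apply]
  rw [Finset.sum_eq_single j]
  · by_cases hp : k = p <;> by_cases hq : k = q <;>
      simp_all [Complex.normSq_eq_norm_sq, mul_comm, Complex.mul_conj]
  · intro x _ hx
    simp [Ne.symm hx]
  · simp

lemma trNorm_eq_sqrt {a b : ℕ} (A : Matrix (Fin a) (Fin b) ℂ) (c : ℝ) (hc : 0 ≤ c)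
    (h : (Aᴴ * A) * (Aᴴ * A) = (c : ℂ) • (Aᴴ * A)) (htr : (Aᴴ * A).trace = ((c : ℝ) : ℂ)) :
    trNorm A = Real.sqrt c := by
  have hH := (Matrix.posSemidef_conjTranspose_mul_self A).1
  have heig : ∀ i, hH.eigenvalues i = 0 ∨ hH.eigenvalues i = c :=
    fun i => eig_zero_or hH c h i
  have hsum : ∑ i, hH.eigenvalues i = c := by
    have h1 := sum_eig_eq_trace hH
    rw [htr] at h1
    exact_mod_cast h1
  rcases eq_or_lt_of_le hc with hc0 | hcpos
  · have : ∀ i, hH.eigenvalues i = 0 := by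
      intro i; rcases heig i with h' | h'
      · exact h'
      · rw [h', ← hc0]
    unfold trNorm
    simp only [this]
    simp [← hc0]
  · have hstep : ∀ i, Real.sqrt (hH.eigenvalues i) = hH.eigenvalues i / Real.sqrt c := by
      intro i; rcases heig i with h' | h'
      · simp [h']
      · rw [h', Real.div_sqrt]
    unfold trNorm
    rw [Finset.sum_congr rfl fun i _ => hstep i, ← Finset.sum_div, hsum, Real.div_sqrt]

lemma trace_std {N : ℕ} (k : Fin N) (w : ℂ) :
    (Matrix.single k k w).trace = w := by
  unfold Matrix.trace
  rw [Matrix.diag_single_same]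
  simp

lemma trNorm_std {a b : ℕ} (j : Fin a) (k : Fin b) (z : ℂ) :
    trNorm (Matrix.single j k z) = ‖z‖ := by
  rw [trNorm_eq_sqrt _ (‖z‖ ^ 2) (by positivity)]
  · exact Real.sqrt_sq (norm_nonneg z)
  · rw [conjT_mul_std, Matrix.single_mul_single_same, Matrix.smul_single,
      smul_eq_mul]
  · rw [conjT_mul_std, trace_std]

lemma frob_le_trNorm {a b : ℕ} (A : Matrix (Fin a) (Fin b) ℂ) :
    Real.sqrt (∑ p : Fin a × Fin b, ‖A p.1 p.2‖ ^ 2) ≤ trNorm A := by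
  have hH := (Matrix.posSemidef_conjTranspose_mul_self A).1
  have hnn : ∀ i, 0 ≤ hH.eigenvalues i :=
    (Matrix.posSemidef_conjTranspose_mul_self A).eigenvalues_nonneg
  have htr : (Aᴴ * A).trace = ((∑ p : Fin a × Fin b, ‖A p.1 p.2‖ ^ 2 : ℝ) : ℂ) := by
    unfold Matrix.trace
    simp only [Matrix.diag_apply, Matrix.mul_apply, Matrix.conjTranspose_apply]
    rw [Fintype.sum_prod_type]
    push_cast
    rw [Finset.sum_comm]
    congr 1; ext i; congr 1; ext q
    rw [mul_comm]
    simp only [Complex.star_def, Complex.mul_conj]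
    norm_cast
    rw [Complex.sq_norm]
  have hsum : ∑ i, hH.eigenvalues i = ∑ p : Fin a × Fin b, ‖A p.1 p.2‖ ^ 2 := by
    have h1 := sum_eig_eq_trace hH
    rw [htr] at h1
    exact_mod_cast h1
  rw [← hsum]
  have h2 : ∑ i, hH.eigenvalues i ≤ (∑ i, Real.sqrt (hH.eigenvalues i)) ^ 2 := by
    calc ∑ i, hH.eigenvalues i = ∑ i, Real.sqrt (hH.eigenvalues i) ^ 2 := by
          refine Finset.sum_congr rfl fun i _ => ?_
          rw [Real.sq_sqrt (hnn i)]
      _ ≤ (∑ i, Real.sqrt (hH.eigenvalues i)) ^ 2 :=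
          Finset.sum_sq_le_sq_sum_of_nonneg fun i _ => Real.sqrt_nonneg _
  calc Real.sqrt (∑ i, hH.eigenvalues i)
      ≤ Real.sqrt ((∑ i, Real.sqrt (hH.eigenvalues i)) ^ 2) := Real.sqrt_le_sqrt h2
    _ = trNorm A := by
        rw [Real.sqrt_sq (Finset.sum_nonneg fun i _ => Real.sqrt_nonneg _)]
        rfl

lemma abs_F_le {d : ℕ} (x y : Matrix (Fin d) (Fin d) ℂ) :
    ‖∑ p : Fin d × Fin d, x p.1 p.2 * y p.1 p.2‖ ≤ trNorm x * trNorm y := by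
  calc ‖∑ p : Fin d × Fin d, x p.1 p.2 * y p.1 p.2‖
      ≤ ∑ p : Fin d × Fin d, ‖x p.1 p.2 * y p.1 p.2‖ :=
        norm_sum_le _ _
    _ = ∑ p : Fin d × Fin d, ‖x p.1 p.2‖ * ‖y p.1 p.2‖ := by
        simp [_root_.map_mul]
    _ ≤ Real.sqrt (∑ p : Fin d × Fin d, ‖x p.1 p.2‖ ^ 2)
        * Real.sqrt (∑ p : Fin d × Fin d, ‖y p.1 p.2‖ ^ 2) :=
        Real.sum_mul_le_sqrt_mul_sqrt _ _ _
    _ ≤ trNorm x * trNorm y := by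
        apply mul_le_mul (frob_le_trNorm x) (frob_le_trNorm y) (Real.sqrt_nonneg _)
          (trNorm_nonneg x)

/-- The canonical "diagonal" vector. -/
def diagVec {d : ℕ} (v : Fin d → ℂ) : HT d d :=
  WithLp.toLp 2 (fun p : Fin d × Fin d => if p.1 = p.2 then v p.1 else 0)

lemma proj_diag_decomp {d : ℕ} (v : Fin d → ℂ) :
    ((∑ j, ‖v j‖) ^ 2) ∈ { t : ℝ | ∃ (k : ℕ)
      (x : Fin k → Matrix (Fin d) (Fin d) ℂ) (y : Fin k → Matrix (Fin d) (Fin d) ℂ),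
      proj (diagVec v) = ∑ i, kron (x i) (y i) ∧
      t = ∑ i, trNorm (x i) * trNorm (y i) } := by
  refine ⟨d * d,
    fun i => Matrix.single (finProdFinEquiv.symm i).1 (finProdFinEquiv.symm i).2
      (v (finProdFinEquiv.symm i).1 * (starRingEnd ℂ) (v (finProdFinEquiv.symm i).2)),
    fun i => Matrix.single (finProdFinEquiv.symm i).1 (finProdFinEquiv.symm i).2 1,
    ?_, ?_⟩
  · rw [Fintype.sum_equiv ((finProdFinEquiv (m := d) (n := d)).symm) _
      (fun q : Fin d × Fin d => kron
        (Matrix.single q.1 q.2 (v q.1 * (starRingEnd ℂ) (v q.2)))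
        (Matrix.single q.1 q.2 1)) (fun i => rfl)]
    ext ⟨a, b⟩ ⟨c, e⟩
    simp only [proj, diagVec, kron, Matrix.of_apply, Matrix.sum_apply,
      Matrix.single, Fintype.sum_prod_type, ite_and, mul_ite, ite_mul,
      mul_zero, zero_mul, mul_one, Finset.sum_ite_eq, Finset.mem_univ, if_true]
    by_cases hab : a = b <;> by_cases hce : c = e <;>
      simp [hab, hce, eq_comm]
  · rw [Fintype.sum_equiv ((finProdFinEquiv (m := d) (n := d)).symm) _
      (fun q : Fin d × Fin d => trNorm (Matrix.single q.1 q.2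
        (v q.1 * (starRingEnd ℂ) (v q.2))) * trNorm (Matrix.single q.1 q.2 1))
      (fun i => rfl)]
    simp only [trNorm_std, norm_mul, Complex.norm_conj, norm_one, mul_one]
    rw [Fintype.sum_prod_type, sq, Finset.sum_mul_sum]

lemma gcn_elt_nonneg {m n : ℕ} (M : Matrix (Fin m × Fin n) (Fin m × Fin n) ℂ) :
    ∀ t ∈ { t : ℝ | ∃ (k : ℕ) (x : Fin k → Matrix (Fin m) (Fin m) ℂ)
      (y : Fin k → Matrix (Fin n) (Fin n) ℂ),
      M = ∑ i, kron (x i) (y i) ∧ t = ∑ i, trNorm (x i) * trNorm (y i) }, 0 ≤ t := by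
  rintro t ⟨k, x, y, _, rfl⟩
  exact Finset.sum_nonneg fun i _ => mul_nonneg (trNorm_nonneg _) (trNorm_nonneg _)

lemma gcn_nonneg {m n : ℕ} (M : Matrix (Fin m × Fin n) (Fin m × Fin n) ℂ) : 0 ≤ gcn M :=
  Real.sInf_nonneg (gcn_elt_nonneg M)

lemma gcn_diag_le {d : ℕ} (v : Fin d → ℂ) :
    gcn (proj (diagVec v)) ≤ (∑ j, ‖v j‖) ^ 2 :=
  csInf_le ⟨0, fun _ ht => gcn_elt_nonneg _ _ ht⟩ (proj_diag_decomp v)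

lemma gcn_maxent_ge : (4 : ℝ) ≤ gcn (proj (diagVec (fun _ : Fin 4 => (1/2 : ℂ)))) := by
  apply le_csInf ⟨_, proj_diag_decomp _⟩
  rintro t ⟨k, x, y, hM, rfl⟩
  have key : (∑ i, ∑ p : Fin 4 × Fin 4, x i p.1 p.2 * y i p.1 p.2) = (4 : ℂ) := by
    have h1 : ∀ j k : Fin 4,
        proj (diagVec fun _ : Fin 4 => (1/2 : ℂ)) (j, j) (k, k) = ∑ i, x i j k * y i j k := by
      intro j k
      rw [hM]
      simp [Matrix.sum_apply, kron]
    calc (∑ i, ∑ p : Fin 4 × Fin 4, x i p.1 p.2 * y i p.1 p.2)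
        = ∑ p : Fin 4 × Fin 4, ∑ i, x i p.1 p.2 * y i p.1 p.2 := Finset.sum_comm
      _ = ∑ p : Fin 4 × Fin 4,
          proj (diagVec fun _ : Fin 4 => (1/2 : ℂ)) (p.1, p.1) (p.2, p.2) :=
          Finset.sum_congr rfl fun p _ => (h1 p.1 p.2).symm
      _ = (4 : ℂ) := by
          simp [proj, diagVec, Complex.conj_ofNat]
          norm_num [Complex.ext_iff]
  calc (4 : ℝ) = ‖∑ i, ∑ p : Fin 4 × Fin 4, x i p.1 p.2 * y i p.1 p.2‖ := by
        rw [key]; simp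
    _ ≤ ∑ i, ‖∑ p : Fin 4 × Fin 4, x i p.1 p.2 * y i p.1 p.2‖ :=
        norm_sum_le _ _
    _ ≤ ∑ i, trNorm (x i) * trNorm (y i) := Finset.sum_le_sum fun i _ => abs_F_le _ _

lemma ptrace2_diag {d : ℕ} (v : Fin d → ℂ) :
    ptrace2 (proj (diagVec v)) = Matrix.diagonal (fun i => v i * (starRingEnd ℂ) (v i)) := by
  ext i j
  simp only [ptrace2, Matrix.of_apply, proj, diagVec]
  by_cases hij : i = j
  · subst hij
    simp [Matrix.diagonal, Finset.sum_ite_eq, eq_comm]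
  · simp [Matrix.diagonal, hij, eq_comm]

lemma ptrace1_diag {d : ℕ} (v : Fin d → ℂ) :
    ptrace1 (proj (diagVec v)) = Matrix.diagonal (fun i => v i * (starRingEnd ℂ) (v i)) := by
  ext i j
  simp only [ptrace1, Matrix.of_apply, proj, diagVec]
  by_cases hij : i = j
  · subst hij
    simp [Matrix.diagonal, Finset.sum_ite_eq, eq_comm]
  · simp [Matrix.diagonal, hij, eq_comm]

def sc : ℝ := (Real.sqrt 2)⁻¹

lemma s_sq : sc * sc = 1/2 := by
  rw [sc, ← mul_inv]
  rw [Real.mul_self_sqrt (by norm_num)]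
  norm_num

lemma s_nonneg : 0 ≤ sc := by
  rw [sc]; positivity

lemma norm_psi1 : ‖(diagVec ![(sc:ℂ), (sc:ℂ), 0, 0] : HT 4 4)‖ = 1 := by
  rw [EuclideanSpace.norm_eq]
  rw [show (∑ i : Fin 4 × Fin 4, ‖(diagVec ![(sc:ℂ), (sc:ℂ), 0, 0] : HT 4 4) i‖ ^ 2) = 1 by
    rw [Fintype.sum_prod_type]
    simp [diagVec, Fin.sum_univ_four, Complex.norm_real, abs_of_nonneg s_nonneg]
    have := s_sq; nlinarith [this]]
  exact Real.sqrt_one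

lemma norm_psi2 : ‖(diagVec ![0, 0, (sc:ℂ), (sc:ℂ)] : HT 4 4)‖ = 1 := by
  rw [EuclideanSpace.norm_eq]
  rw [show (∑ i : Fin 4 × Fin 4, ‖(diagVec ![0, 0, (sc:ℂ), (sc:ℂ)] : HT 4 4) i‖ ^ 2) = 1 by
    rw [Fintype.sum_prod_type]
    simp [diagVec, Fin.sum_univ_four, Complex.norm_real, abs_of_nonneg s_nonneg]
    have := s_sq; nlinarith [this]]
  exact Real.sqrt_one

lemma orth2 : ptrace2 (proj (diagVec ![(sc:ℂ), (sc:ℂ), 0, 0] : HT 4 4))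
    * ptrace2 (proj (diagVec ![0, 0, (sc:ℂ), (sc:ℂ)] : HT 4 4)) = 0 := by
  rw [ptrace2_diag, ptrace2_diag, Matrix.diagonal_mul_diagonal]
  rw [show (fun i => (![(sc:ℂ), (sc:ℂ), 0, 0] i * (starRingEnd ℂ) (![(sc:ℂ), (sc:ℂ), 0, 0] i))
      * (![0, 0, (sc:ℂ), (sc:ℂ)] i * (starRingEnd ℂ) (![0, 0, (sc:ℂ), (sc:ℂ)] i))) = 0 by
    funext i; fin_cases i <;> simp]
  exact Matrix.diagonal_zero

lemma orth1 : ptrace1 (proj (diagVec ![(sc:ℂ), (sc:ℂ), 0, 0] : HT 4 4))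
    * ptrace1 (proj (diagVec ![0, 0, (sc:ℂ), (sc:ℂ)] : HT 4 4)) = 0 := by
  rw [ptrace1_diag, ptrace1_diag, Matrix.diagonal_mul_diagonal]
  rw [show (fun i => (![(sc:ℂ), (sc:ℂ), 0, 0] i * (starRingEnd ℂ) (![(sc:ℂ), (sc:ℂ), 0, 0] i))
      * (![0, 0, (sc:ℂ), (sc:ℂ)] i * (starRingEnd ℂ) (![0, 0, (sc:ℂ), (sc:ℂ)] i))) = 0 by
    funext i; fin_cases i <;> simp]
  exact Matrix.diagonal_zero

lemma vec_sum : ((sc : ℂ)) • (diagVec ![(sc:ℂ), (sc:ℂ), 0, 0] : HT 4 4)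
    + ((sc : ℂ)) • (diagVec ![0, 0, (sc:ℂ), (sc:ℂ)] : HT 4 4)
    = (diagVec (fun _ : Fin 4 => (1/2 : ℂ)) : HT 4 4) := by
  ext p
  have hs : ((sc:ℂ)) * ((sc:ℂ)) = 1/2 := by
    rw [show ((sc:ℂ)) * ((sc:ℂ)) = ((sc * sc : ℝ) : ℂ) by push_cast; ring, s_sq]
    push_cast; ring
  show ((sc:ℂ)) * _ + ((sc:ℂ)) * _ = _
  obtain ⟨a, b⟩ := p
  simp only [diagVec]
  by_cases hab : a = b
  · subst hab
    simp only [if_pos rfl]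
    fin_cases a <;> simp [← hs]
  · simp [hab]

lemma norm_l : ‖((sc : ℝ) : ℂ)‖ ^ 2 = 1/2 := by
  rw [Complex.norm_real, Real.norm_eq_abs, abs_of_nonneg s_nonneg, sq, s_sq]

lemma stdVec_eq : (stdVec ![(1:ℝ)/2, (1:ℝ)/2] : HT 2 2)
    = diagVec (fun _ : Fin 2 => ((Real.sqrt (1/2) : ℝ) : ℂ)) := by
  ext p
  obtain ⟨a, b⟩ := p
  simp only [stdVec, diagVec]
  by_cases hab : a = b
  · subst hab
    fin_cases a <;> simp
  · simp [hab]

lemma cap_le {x : ℝ} (h0 : 0 ≤ x) (h2 : x ≤ 2) : x * Real.log x ≤ 2 * Real.log 2 := by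
  rcases le_or_gt x 1 with h | h
  · have hlog : Real.log x ≤ 0 := Real.log_nonpos h0 h
    nlinarith [Real.log_pos (by norm_num : (1:ℝ) < 2)]
  · calc x * Real.log x ≤ x * Real.log 2 :=
        mul_le_mul_of_nonneg_left (Real.log_le_log (by linarith) h2) h0
      _ ≤ 2 * Real.log 2 := mul_le_mul_of_nonneg_right h2 (Real.log_nonneg (by norm_num))

end GcnAux

/-- The functional `σ ↦ ‖σ‖_γ ln ‖σ‖_γ` does not satisfy the superposition
axiom (P4). -/
theorem gcn_entropy_fails_P4 :
    ∃ (m n : ℕ) (ψ₁ ψ₂ : HT m n) (l₁ l₂ : ℂ),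
      ‖ψ₁‖ = 1 ∧ ‖ψ₂‖ = 1 ∧ SchmidtOrthogonal ψ₁ ψ₂ ∧
      ‖l₁‖ ^ 2 + ‖l₂‖ ^ 2 = 1 ∧
      gcn (proj (l₁ • ψ₁ + l₂ • ψ₂)) * Real.log (gcn (proj (l₁ • ψ₁ + l₂ • ψ₂)))
        ≠ gcn (proj (stdVec ![‖l₁‖ ^ 2, ‖l₂‖ ^ 2]))
            * Real.log (gcn (proj (stdVec ![‖l₁‖ ^ 2, ‖l₂‖ ^ 2])))
          + ‖l₁‖ ^ 2 * (gcn (proj ψ₁) * Real.log (gcn (proj ψ₁)))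
          + ‖l₂‖ ^ 2 * (gcn (proj ψ₂) * Real.log (gcn (proj ψ₂))) := by
  classical
  open GcnAux in
  refine ⟨4, 4, diagVec ![(sc:ℂ), (sc:ℂ), 0, 0], diagVec ![0, 0, (sc:ℂ), (sc:ℂ)],
    ((sc : ℝ) : ℂ), ((sc : ℝ) : ℂ), norm_psi1, norm_psi2, ⟨orth2, orth1⟩, ?_, ?_⟩
  · rw [norm_l]; norm_num
  · rw [norm_l, vec_sum, stdVec_eq]
    set g := gcn (proj (diagVec (fun _ : Fin 4 => (1/2 : ℂ)))) with hgdef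
    have hg : (4:ℝ) ≤ g := gcn_maxent_ge
    have hg0le : gcn (proj (diagVec (fun _ : Fin 2 => ((Real.sqrt (1/2) : ℝ) : ℂ)))) ≤ 2 := by
      refine le_trans (gcn_diag_le _) ?_
      rw [show (∑ j : Fin 2, ‖((Real.sqrt (1/2) : ℝ) : ℂ)‖) =
          2 * Real.sqrt (1/2) by
        rw [Fin.sum_univ_two]
        rw [Complex.norm_real, Real.norm_eq_abs, abs_of_nonneg (Real.sqrt_nonneg _)]
        ring]
      rw [mul_pow, Real.sq_sqrt (by norm_num : (0:ℝ) ≤ 1/2)]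
      norm_num
    have hg1le : gcn (proj (diagVec ![(sc:ℂ), (sc:ℂ), 0, 0])) ≤ 2 := by
      refine le_trans (gcn_diag_le _) ?_
      rw [show (∑ j : Fin 4, ‖(![(sc:ℂ), (sc:ℂ), 0, 0]) j‖) = 2 * sc by
        rw [Fin.sum_univ_four]
        simp [Complex.norm_real, abs_of_nonneg s_nonneg]
        ring]
      have := s_sq; nlinarith [this]
    have hg2le : gcn (proj (diagVec ![0, 0, (sc:ℂ), (sc:ℂ)])) ≤ 2 := by
      refine le_trans (gcn_diag_le _) ?_
      rw [show (∑ j : Fin 4, ‖(![0, 0, (sc:ℂ), (sc:ℂ)]) j‖) = 2 * sc by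
        rw [Fin.sum_univ_four]
        simp [Complex.norm_real, abs_of_nonneg s_nonneg]
        ring]
      have := s_sq; nlinarith [this]
    have hg0nn := gcn_nonneg (proj (diagVec (fun _ : Fin 2 => ((Real.sqrt (1/2) : ℝ) : ℂ))))
    have hg1nn := gcn_nonneg (proj (diagVec ![(sc:ℂ), (sc:ℂ), 0, 0]))
    have hg2nn := gcn_nonneg (proj (diagVec ![0, 0, (sc:ℂ), (sc:ℂ)]))
    have hcap0 := cap_le hg0nn hg0le
    have hcap1 := cap_le hg1nn hg1le
    have hcap2 := cap_le hg2nn hg2le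
    have hlhs : 4 * Real.log 4 ≤ g * Real.log g := by
      calc 4 * Real.log 4 ≤ g * Real.log 4 :=
          mul_le_mul_of_nonneg_right hg (Real.log_nonneg (by norm_num))
        _ ≤ g * Real.log g :=
          mul_le_mul_of_nonneg_left (Real.log_le_log (by norm_num) hg) (by linarith)
    have hlog4 : Real.log 4 = 2 * Real.log 2 := by
      rw [show (4:ℝ) = 2^2 by norm_num, Real.log_pow]
      push_cast; ring
    have hlog2pos : 0 < Real.log 2 := Real.log_pos (by norm_num)
    intro heq
    rw [heq] at hlhs
    rw [hlog4] at hlhs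
    nlinarith [hcap0, hcap1, hcap2, hlhs, hlog2pos]

end
end
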